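/- Similarity Relation (special case): let α be a real number with 0 < α < π/2, and set M = (0,1), N = (0,−1), Q = (cot α, 0), R = (cot 2α, 0) in ℝ². Let S be the circumcenter of the (non-collinear) triple M, Q, R, and let λ = (cot α − cot 2α)/2. Then λ > 0, and the triangle QRS is similar to the triangle NMQ with constant of proportionality λ: dist(Q,R) = λ · dist(N,M), dist(S,Q) = λ · dist(Q,N), and dist(S,R) = λ · dist(Q,M). Moreover the bases are perpendicular: the vector M − N is perpendicular to the vector R − Q. -/

import Mathlib

open Real

/-- The point (x, y) of the Euclidean plane. -/
noncomputable def pt (x y : ℝ) : EuclideanSpace ℝ (Fin 2) := WithLp.toLp 2 ![x, y]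

lemma dist_formula (x y : EuclideanSpace ℝ (Fin 2)) :
    dist x y = Real.sqrt ((x 0 - y 0)^2 + (x 1 - y 1)^2) := by
  rw [EuclideanSpace.dist_eq]
  congr 1
  simp [Fin.sum_univ_two, Real.dist_eq, sq_abs]

lemma pt_apply_zero (x y : ℝ) : pt x y 0 = x := rfl
lemma pt_apply_one (x y : ℝ) : pt x y 1 = y := rfl

set_option maxHeartbeats 1000000 in
/-- Similarity Relation (special case): with M = (0,1), N = (0,-1), Q = (cot α, 0),
R = (cot 2α, 0) and S the circumcenter of M, Q, R (the unique point equidistant from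
all three), setting λ = (cot α - cot 2α)/2 we have λ > 0, triangle QRS is similar to
triangle NMQ with ratio λ, and the bases MN and QR are perpendicular. -/
theorem similarity_relation_special_case (α : ℝ) (h0 : 0 < α) (h1 : α < π / 2)
    (M N Q R S : EuclideanSpace ℝ (Fin 2))
    (hM : M = pt 0 1) (hN : N = pt 0 (-1))
    (hQ : Q = pt (Real.cot α) 0) (hR : R = pt (Real.cot (2 * α)) 0)
    (hS1 : dist S M = dist S Q) (hS2 : dist S M = dist S R) :
    0 < (Real.cot α - Real.cot (2 * α)) / 2 ∧
    dist Q R = (Real.cot α - Real.cot (2 * α)) / 2 * dist N M ∧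
    dist S Q = (Real.cot α - Real.cot (2 * α)) / 2 * dist Q N ∧
    dist S R = (Real.cot α - Real.cot (2 * α)) / 2 * dist Q M ∧
    (inner ℝ (M - N) (R - Q) : ℝ) = 0 := by
  have hπ := Real.pi_pos
  obtain ⟨s, cs, hs, hc, pyth, hcot, hcot2⟩ :
      ∃ s cs : ℝ, 0 < s ∧ 0 < cs ∧ s ^ 2 + cs ^ 2 = 1 ∧
        Real.cot α = cs / s ∧ Real.cot (2 * α) = (2 * cs ^ 2 - 1) / (2 * s * cs) := by
    refine ⟨Real.sin α, Real.cos α, Real.sin_pos_of_pos_of_lt_pi h0 (by linarith),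
      Real.cos_pos_of_mem_Ioo ⟨by linarith, h1⟩, Real.sin_sq_add_cos_sq α,
      Real.cot_eq_cos_div_sin α, ?_⟩
    rw [Real.cot_eq_cos_div_sin, Real.cos_two_mul, Real.sin_two_mul]
  have hs0 : s ≠ 0 := ne_of_gt hs
  have hc0 : cs ≠ 0 := ne_of_gt hc
  -- λ value
  have hlam : (Real.cot α - Real.cot (2 * α)) / 2 = 1 / (4 * s * cs) := by
    rw [hcot, hcot2]; field_simp; ring
  have hlampos : 0 < (Real.cot α - Real.cot (2 * α)) / 2 := by
    rw [hlam]; positivity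
  -- coordinates of S
  obtain ⟨a, b, hadef, hbdef⟩ : ∃ a b : ℝ, S 0 = a ∧ S 1 = b := ⟨_, _, rfl, rfl⟩
  have hsq : ∀ x y : EuclideanSpace ℝ (Fin 2),
      dist x y ^ 2 = (x 0 - y 0)^2 + (x 1 - y 1)^2 := by
    intro x y
    rw [dist_formula, Real.sq_sqrt (by positivity)]
  have e1 : a ^ 2 + (b - 1) ^ 2 = (a - cs / s) ^ 2 + b ^ 2 := by
    have h := congrArg (· ^ 2) hS1
    rw [hsq, hsq, hM, hQ, hcot] at h
    simpa [pt_apply_zero, pt_apply_one, hadef, hbdef] using h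
  have e2 : a ^ 2 + (b - 1) ^ 2 = (a - (2 * cs ^ 2 - 1) / (2 * s * cs)) ^ 2 + b ^ 2 := by
    have h := congrArg (· ^ 2) hS2
    rw [hsq, hsq, hM, hR, hcot2] at h
    simpa [pt_apply_zero, pt_apply_one, hadef, hbdef] using h
  have hcr : cs / s - (2 * cs ^ 2 - 1) / (2 * s * cs) = 1 / (2 * s * cs) := by
    field_simp; ring
  -- solve for a and b
  have ea : a = (4 * cs ^ 2 - 1) / (4 * s * cs) := by
    have e3 : a * (cs / s - (2 * cs ^ 2 - 1) / (2 * s * cs))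
        = ((cs / s) ^ 2 - ((2 * cs ^ 2 - 1) / (2 * s * cs)) ^ 2) / 2 := by
      linear_combination (e1 - e2) / 2
    rw [hcr] at e3
    field_simp at e3
    rw [eq_div_iff (by positivity : (4 : ℝ) * s * cs ≠ 0)]
    have h5 : (a * (4 * s * cs)) * (2 * s ^ 3 * cs) = (4 * cs ^ 2 - 1) * (2 * s ^ 3 * cs) := by
      linear_combination (2 * s ^ 3 * cs) * e3
    exact mul_right_cancel₀ (by positivity) h5
  have eb : b = 1 / (4 * s ^ 2) := by
    have h4 : 2 * a * (cs / s) - 2 * b = (cs / s) ^ 2 - 1 := by linear_combination e1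
    rw [ea] at h4
    field_simp at h4
    rw [eq_div_iff (by positivity : (4 : ℝ) * s ^ 2 ≠ 0)]
    have h5 : (b * (4 * s ^ 2)) * (2 * s ^ 2 * cs) = 1 * (2 * s ^ 2 * cs) := by
      linear_combination (-(s ^ 2 * cs)) * h4 + (4 * s ^ 2 * cs) * pyth
    simpa using mul_right_cancel₀ (by positivity : (2:ℝ) * s ^ 2 * cs ≠ 0) h5
  refine ⟨hlampos, ?_, ?_, ?_, ?_⟩
  · -- dist Q R
    rw [hlam, hQ, hR, hM, hN, dist_formula, dist_formula, hcot, hcot2]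
    simp only [pt_apply_zero, pt_apply_one]
    rw [show (0:ℝ) - 0 = 0 by ring, show (-1:ℝ) - 1 = -2 by ring]
    rw [show (cs / s - (2 * cs ^ 2 - 1) / (2 * s * cs)) = 1 / (2 * s * cs) from hcr]
    rw [show (0:ℝ)^2 + (-2:ℝ)^2 = 2^2 by norm_num]
    rw [Real.sqrt_sq (by norm_num : (0:ℝ) ≤ 2)]
    rw [show (1 / (2 * s * cs))^2 + (0:ℝ)^2 = (1/(2*s*cs))^2 by ring]
    rw [Real.sqrt_sq (by positivity)]
    field_simp
    ring
  · -- dist S Q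
    rw [hlam, hQ, hN, dist_formula, dist_formula, hcot]
    simp only [pt_apply_zero, pt_apply_one, hadef, hbdef]
    rw [show (1:ℝ) / (4 * s * cs) * Real.sqrt ((cs / s - 0) ^ 2 + (0 - -1) ^ 2)
        = Real.sqrt ((1 / (4 * s * cs))^2 * ((cs / s - 0) ^ 2 + (0 - -1) ^ 2)) by
      rw [Real.sqrt_mul (by positivity), Real.sqrt_sq (by positivity)]]
    congr 1
    rw [ea, eb]
    field_simp
    ring_nf
    try linear_combination (s ^ 2 * cs ^ 2) * pyth
  · -- dist S R
    rw [hlam, hR, hQ, hM, dist_formula, dist_formula, hcot, hcot2]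
    simp only [pt_apply_zero, pt_apply_one, hadef, hbdef]
    rw [show (1:ℝ) / (4 * s * cs) * Real.sqrt ((cs / s - 0) ^ 2 + (0 - 1) ^ 2)
        = Real.sqrt ((1 / (4 * s * cs))^2 * ((cs / s - 0) ^ 2 + (0 - 1) ^ 2)) by
      rw [Real.sqrt_mul (by positivity), Real.sqrt_sq (by positivity)]]
    congr 1
    rw [ea, eb]
    field_simp
    ring_nf
    try linear_combination (s ^ 2 * cs ^ 2) * pyth
  · -- perpendicularity
    rw [hM, hN, hQ, hR]
    simp [pt, PiLp.inner_apply, Fin.sum_univ_two]
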